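/- Let f be μ-strongly convex and L-smooth with minimizer x*. Let x_{k+1} = x_k - h_k ∇f(x_k) with the Polyak step size h_k = 2(f(x_k) - f*)/||∇f(x_k)||^2. Then q_{k+1} ≤ (1 - μ/L) q_k, where q_k = (1/2)||x_k - x*||^2; consequently q_k ≤ (1 - μ/L)^k q_0. -/

import Mathlib

open scoped RealInnerProductSpace

theorem stmt_5 {d : ℕ} (μ L : ℝ) (hμ : 0 < μ) (hμL : μ ≤ L)
    (f : EuclideanSpace ℝ (Fin d) → ℝ) (g : EuclideanSpace ℝ (Fin d) → EuclideanSpace ℝ (Fin d))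
    (hconv : ∀ x y, f x - (f y + ⟪g y, x - y⟫) ≥ μ/2 * ‖x - y‖^2)
    (hsmooth : ∀ x y, f x - (f y + ⟪g y, x - y⟫) ≥ (1/(2*L)) * ‖g x - g y‖^2)
    (xstar : EuclideanSpace ℝ (Fin d)) (hmin : ∀ x, f xstar ≤ f x)
    (hgstar : g xstar = 0)
    (x : ℕ → EuclideanSpace ℝ (Fin d)) (h : ℕ → ℝ)
    (hgx : ∀ k, g (x k) ≠ 0)
    (hstep : ∀ k, h k = 2 * (f (x k) - f xstar) / ‖g (x k)‖^2)
    (hiter : ∀ k, x (k+1) = x k - h k • g (x k))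
    (q : ℕ → ℝ) (hq : ∀ k, q k = (1/2) * ‖x k - xstar‖^2) :
    (∀ k, q (k+1) ≤ (1 - μ/L) * q k) ∧ (∀ k, q k ≤ (1 - μ/L)^k * q 0) := by
  have hL : 0 < L := lt_of_lt_of_le hμ hμL
  have key : ∀ k, ‖x (k+1) - xstar‖^2 ≤ (1 - μ/L) * ‖x k - xstar‖^2 := by
    intro k
    set G := g (x k) with hG
    set a := x k - xstar with ha
    have hng : (0:ℝ) < ‖G‖^2 := pow_pos (norm_pos_iff.mpr (hgx k)) 2
    have hΔ0 : 0 ≤ f (x k) - f xstar := sub_nonneg.2 (hmin _)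
    have hΔL : f (x k) - f xstar ≥ (1/(2*L)) * ‖G‖^2 := by
      have h1 := hsmooth (x k) xstar
      rw [hgstar] at h1
      simpa using h1
    have hinner : ⟪G, a⟫ ≥ (f (x k) - f xstar) + μ/2 * ‖a‖^2 := by
      have h1 := hconv xstar (x k)
      have h2 : xstar - x k = -a := by rw [ha]; abel
      rw [h2, inner_neg_right, norm_neg] at h1
      linarith
    have hhk : h k = 2 * (f (x k) - f xstar) / ‖G‖^2 := hstep k
    have hk0 : 0 ≤ h k := by rw [hhk]; positivity
    have hk2 : h k * ‖G‖^2 = 2 * (f (x k) - f xstar) := by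
      rw [hhk]; exact div_mul_cancel₀ _ (ne_of_gt hng)
    have hk3 : (h k)^2 * ‖G‖^2 = h k * (2*(f (x k) - f xstar)) := by
      rw [← hk2]; ring
    have h4 : ‖G‖^2 ≤ 2*L*(f (x k) - f xstar) := by
      have h5 := hΔL
      rw [ge_iff_le, one_div, inv_mul_le_iff₀ (by positivity)] at h5
      exact h5
    have hkL : 1/L ≤ h k := by
      rw [hhk, div_le_div_iff₀ hL hng]
      nlinarith [h4]
    have hexp : x (k+1) - xstar = a - h k • G := by
      rw [hiter k, ha]; module
    have hnorm : ‖a - h k • G‖^2 = ‖a‖^2 - 2 * (h k * ⟪G, a⟫) + (h k)^2 * ‖G‖^2 := by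
      rw [norm_sub_sq_real, inner_smul_right, real_inner_comm, norm_smul]
      simp [mul_pow, sq_abs]
    have p1 : 0 ≤ h k * (⟪G, a⟫ - ((f (x k) - f xstar) + μ/2 * ‖a‖^2)) :=
      mul_nonneg hk0 (by linarith)
    have p2 : 0 ≤ (h k - 1/L) * (μ * ‖a‖^2) :=
      mul_nonneg (by linarith) (by positivity)
    rw [hexp, hnorm]
    have hdiv : μ/L * ‖a‖^2 = (1/L) * (μ * ‖a‖^2) := by ring
    nlinarith [p1, p2, hk3]
  have hc0 : 0 ≤ 1 - μ/L := by
    have : μ/L ≤ 1 := (div_le_one hL).mpr hμL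
    linarith
  have main : ∀ k, q (k+1) ≤ (1 - μ/L) * q k := by
    intro k
    rw [hq, hq]
    nlinarith [key k]
  refine ⟨main, ?_⟩
  intro k
  induction k with
  | zero => simp
  | succ n ih =>
    calc q (n+1) ≤ (1 - μ/L) * q n := main n
      _ ≤ (1 - μ/L) * ((1 - μ/L)^n * q 0) := mul_le_mul_of_nonneg_left ih hc0
      _ = (1 - μ/L)^(n+1) * q 0 := by ring
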